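/- Under the assumptions of Theorem 1 (unbiased independent stochastic gradients g_k^1, g_k^2 with covariance G, quadratic objective J with Hessian 2Σ_x, stepsize ε with ρ = max_i(1 - 2ελ_i(Σ_x))² < 1, threshold rule α_k^i = 1 iff J(w_k - εg_k^i) ≤ J(w_k) - λ, and the symmetric two-agent update), the conditional expected cost satisfies E[J(w_{k+1}) | w_k] ≤ E[(1-α_k^i) | w_k]·λ + ρ·J(w_k) + ε²·Tr(Σ_x G) + (1-ρ)·J(w*) for each i ∈ {1,2}. -/

import Mathlib

open Matrix MeasureTheory in
private lemma osd_dot_symm {n : ℕ} (Sx : Matrix (Fin n) (Fin n) ℝ) (h : Sx.IsHermitian)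
    (a b : Fin n → ℝ) : a ⬝ᵥ Sx *ᵥ b = b ⬝ᵥ Sx *ᵥ a := by
  have ht : Sxᵀ = Sx := by
    have := h.eq
    rwa [conjTranspose_eq_transpose_of_trivial] at this
  rw [dotProduct_mulVec, ← vecMul_transpose, ht, dotProduct_comm]

open Matrix in
private lemma osd_psd_nonneg {n : ℕ} (Sx : Matrix (Fin n) (Fin n) ℝ) (h : Sx.PosSemidef)
    (a : Fin n → ℝ) : 0 ≤ a ⬝ᵥ Sx *ᵥ a := by
  simpa using h.dotProduct_mulVec_nonneg a

open Matrix in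
private lemma osd_quad_mid {n : ℕ} (Sx : Matrix (Fin n) (Fin n) ℝ) (h : Sx.PosSemidef)
    (a b : Fin n → ℝ) :
    ((1/2 : ℝ) • (a + b)) ⬝ᵥ Sx *ᵥ ((1/2 : ℝ) • (a + b)) ≤
      (1/2 : ℝ) * (a ⬝ᵥ Sx *ᵥ a) + (1/2 : ℝ) * (b ⬝ᵥ Sx *ᵥ b) := by
  have hs := osd_dot_symm Sx h.1 a b
  have hn := osd_psd_nonneg Sx h (a - b)
  have e : (a - b) ⬝ᵥ Sx *ᵥ (a - b) =
      a ⬝ᵥ Sx *ᵥ a - 2 * (a ⬝ᵥ Sx *ᵥ b) + b ⬝ᵥ Sx *ᵥ b := by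
    simp [sub_dotProduct, dotProduct_sub, mulVec_sub, hs]
    ring
  have e2 : ((1/2 : ℝ) • (a + b)) ⬝ᵥ Sx *ᵥ ((1/2 : ℝ) • (a + b)) =
      (1/4) * (a ⬝ᵥ Sx *ᵥ a) + (1/2) * (a ⬝ᵥ Sx *ᵥ b) + (1/4) * (b ⬝ᵥ Sx *ᵥ b) := by
    simp [smul_dotProduct, dotProduct_smul, mulVec_smul, add_dotProduct, dotProduct_add,
      mulVec_add, hs, smul_eq_mul]
    ring
  rw [e] at hn
  rw [e2]
  linarith

open Matrix in
private lemma osd_quad_diag {n : ℕ} (V : Matrix (Fin n) (Fin n) ℝ) (f d : Fin n → ℝ) :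
    d ⬝ᵥ (V * diagonal f * Vᵀ) *ᵥ d = ∑ j, f j * (Vᵀ *ᵥ d) j ^ 2 := by
  rw [← mulVec_mulVec, ← mulVec_mulVec, dotProduct_mulVec (v := d), ← mulVec_transpose]
  simp [dotProduct, mulVec_diagonal]
  exact Finset.sum_congr rfl fun j _ => by ring

open Matrix in
private lemma osd_quad_spectral {n : ℕ} (Sx : Matrix (Fin n) (Fin n) ℝ) (hSx : Sx.PosSemidef)
    (d : Fin n → ℝ) :
    ∃ y : Fin n → ℝ,
      (d ⬝ᵥ Sx *ᵥ d = ∑ j, hSx.1.eigenvalues j * y j ^ 2) ∧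
      (d ⬝ᵥ (Sx * Sx) *ᵥ d = ∑ j, hSx.1.eigenvalues j ^ 2 * y j ^ 2) ∧
      (d ⬝ᵥ (Sx * Sx * Sx) *ᵥ d = ∑ j, hSx.1.eigenvalues j ^ 3 * y j ^ 2) := by
  set V : Matrix (Fin n) (Fin n) ℝ := (hSx.1.eigenvectorUnitary : Matrix (Fin n) (Fin n) ℝ)
  set f : Fin n → ℝ := hSx.1.eigenvalues
  have hVV : Vᵀ * V = 1 := by
    have := (Matrix.mem_unitaryGroup_iff').mp (hSx.1.eigenvectorUnitary).2
    rwa [← conjTranspose_eq_transpose_of_trivial]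
  have hspec : Sx = V * diagonal f * Vᵀ := by
    have := hSx.1.spectral_theorem
    rw [← conjTranspose_eq_transpose_of_trivial]
    simpa [Matrix.star_eq_conjTranspose] using this
  refine ⟨Vᵀ *ᵥ d, ?_, ?_, ?_⟩
  · rw [hspec, osd_quad_diag]
  · rw [hspec]
    have h2 : V * diagonal f * Vᵀ * (V * diagonal f * Vᵀ) = V * diagonal (fun j => f j ^ 2) * Vᵀ := by
      have hd : diagonal f * diagonal f = diagonal (fun j => f j ^ 2) := by
        rw [diagonal_mul_diagonal]; congr 1; funext j; ring
      calc V * diagonal f * Vᵀ * (V * diagonal f * Vᵀ)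
          = V * diagonal f * (Vᵀ * V) * diagonal f * Vᵀ := by noncomm_ring
        _ = V * (diagonal f * diagonal f) * Vᵀ := by rw [hVV]; noncomm_ring
        _ = V * diagonal (fun j => f j ^ 2) * Vᵀ := by rw [hd]
    rw [h2, osd_quad_diag]
  · rw [hspec]
    have h3' : V * diagonal f * Vᵀ * (V * diagonal f * Vᵀ) * (V * diagonal f * Vᵀ)
        = V * diagonal (fun j => f j ^ 3) * Vᵀ := by
      have hd : diagonal f * diagonal f * diagonal f = diagonal (fun j => f j ^ 3) := by
        rw [diagonal_mul_diagonal, diagonal_mul_diagonal]; congr 1; funext j; ring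
      calc V * diagonal f * Vᵀ * (V * diagonal f * Vᵀ) * (V * diagonal f * Vᵀ)
          = V * diagonal f * (Vᵀ * V) * diagonal f * (Vᵀ * V) * diagonal f * Vᵀ := by noncomm_ring
        _ = V * (diagonal f * diagonal f * diagonal f) * Vᵀ := by rw [hVV]; noncomm_ring
        _ = V * diagonal (fun j => f j ^ 3) * Vᵀ := by rw [hd]
    rw [h3', osd_quad_diag]

open Matrix MeasureTheory ProbabilityTheory Classical in
theorem one_step_descent_inequality {n : ℕ} {Ω : Type*} [MeasurableSpace Ω]
    (P : Measure Ω) [IsProbabilityMeasure P]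
    (Sx : Matrix (Fin n) (Fin n) ℝ) (hSx : Sx.PosSemidef)
    (wstar : Fin n → ℝ) (Jstar lam ε ρ : ℝ) (hε : 0 < ε) (hlam : 0 < lam)
    (J : (Fin n → ℝ) → ℝ)
    -- quadratic objective with Hessian 2Σx, minimizer w*, minimum J*
    (hJ : ∀ v, J v = (v - wstar) ⬝ᵥ Sx.mulVec (v - wstar) + Jstar)
    (hρ : ρ = ⨆ j, (1 - 2 * ε * hSx.1.eigenvalues j) ^ 2) (hρ1 : ρ < 1)
    (wk : Fin n → ℝ) (g : Fin 2 → Ω → Fin n → ℝ) (G : Matrix (Fin n) (Fin n) ℝ)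
    (hmeas : ∀ i, Measurable (g i))
    -- independent and identically distributed stochastic gradients
    (hindep : IndepFun (g 0) (g 1) P)
    (hident : P.map (g 0) = P.map (g 1))
    (hint2 : ∀ i k l, Integrable (fun ω => g i ω k * g i ω l) P)
    -- unbiased: E[g_i] = ∇J(w_k) = 2Σx (w_k - w*)
    (hmean : ∀ i k, ∫ ω, g i ω k ∂P = ((2 : ℝ) • Sx).mulVec (wk - wstar) k)
    -- covariance G
    (hcov : ∀ i k l,
      ∫ ω, (g i ω k - ((2 : ℝ) • Sx).mulVec (wk - wstar) k) *
          (g i ω l - ((2 : ℝ) • Sx).mulVec (wk - wstar) l) ∂P = G k l)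
    -- threshold transmission rule
    (α : Fin 2 → Ω → ℝ)
    (hα : ∀ i ω, α i ω = if J (wk - ε • g i ω) ≤ J wk - lam then (1 : ℝ) else 0)
    -- symmetric two-agent update
    (wnext : Ω → Fin n → ℝ)
    (hnext : ∀ ω, wnext ω =
      if α 0 ω = 1 then
        (if α 1 ω = 1 then wk - (ε / 2) • (g 0 ω + g 1 ω) else wk - ε • g 0 ω)
      else (if α 1 ω = 1 then wk - ε • g 1 ω else wk))
    (hintJ : ∀ i, Integrable (fun ω => J (wk - ε • g i ω)) P)
    (hintnext : Integrable (fun ω => J (wnext ω)) P) :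
    ∀ i : Fin 2, ∫ ω, J (wnext ω) ∂P ≤
      (∫ ω, (1 - α i ω) ∂P) * lam + ρ * J wk + ε ^ 2 * (Sx * G).trace +
        (1 - ρ) * Jstar := by
  -- notation
  set d : Fin n → ℝ := wk - wstar with hd
  set m : Fin n → ℝ := ((2 : ℝ) • Sx).mulVec d with hm
  -- integrability of components of g
  have Ig : ∀ (i : Fin 2) k, Integrable (fun ω => g i ω k) P := by
    intro i k
    refine Integrable.mono' ((hint2 i k k).add (integrable_const 1))
      ((measurable_pi_apply k).comp (hmeas i)).aestronglyMeasurable ?_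
    filter_upwards with ω
    have : |g i ω k| ≤ g i ω k * g i ω k + 1 := by
      nlinarith [sq_nonneg (|g i ω k| - 1), sq_abs (g i ω k), abs_nonneg (g i ω k)]
    simpa [Real.norm_eq_abs] using this
  -- second moments
  have M2 : ∀ (i : Fin 2) k l, ∫ ω, g i ω k * g i ω l ∂P = G k l + m k * m l := by
    intro i k l
    have h := hcov i k l
    have IBk : Integrable (fun ω => m l * g i ω k) P := (Ig i k).const_mul (m l)
    have IBl : Integrable (fun ω => m k * g i ω l) P := (Ig i l).const_mul (m k)
    have IB : Integrable (fun ω => m l * g i ω k + m k * g i ω l) P := IBk.add IBl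
    have I2 : Integrable (fun ω => g i ω k * g i ω l - (m l * g i ω k + m k * g i ω l)) P :=
      (hint2 i k l).sub IB
    have e : (fun ω => (g i ω k - m k) * (g i ω l - m l)) =
        fun ω => (g i ω k * g i ω l - (m l * g i ω k + m k * g i ω l)) + m k * m l :=
      funext fun ω => by ring
    rw [e, integral_add I2 (integrable_const _),
      integral_sub (hint2 i k l) IB, integral_add IBk IBl,
      integral_const_mul, integral_const_mul, hmean i k, hmean i l, integral_const] at h
    simp only [measure_univ, ENNReal.toReal_one, probReal_univ, smul_eq_mul, one_mul] at h
    linarith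
  -- symmetry of G
  have Gsym : ∀ k l, G l k = G k l := by
    intro k l
    rw [← hcov 0 l k, ← hcov 0 k l]
    exact integral_congr_ae (Filter.Eventually.of_forall fun ω => by ring)
  -- trace identity
  have htr : (Sx * G).trace = ∑ k, ∑ l, Sx k l * G k l := by
    simp only [Matrix.trace, Matrix.diag, Matrix.mul_apply]
    exact Finset.sum_congr rfl fun k _ => Finset.sum_congr rfl fun l _ => by rw [Gsym]
  -- expansion of J at a shifted point
  have hJx : ∀ x : Fin n → ℝ, J (wk - ε • x) =
      (∑ k, ∑ l, (d k - ε * x k) * (Sx k l * (d l - ε * x l))) + Jstar := by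
    intro x
    rw [hJ]
    congr 1
    have e : wk - ε • x - wstar = fun k => d k - ε * x k := by
      funext k; simp [hd]; ring
    rw [e]
    simp only [dotProduct, mulVec, Finset.mul_sum]
  -- measurability of x ↦ J (wk - ε • x)
  have hFm : Measurable (fun x : Fin n → ℝ => J (wk - ε • x)) := by
    have e : (fun x : Fin n → ℝ => J (wk - ε • x)) =
        fun x => (∑ k, ∑ l, (d k - ε * x k) * (Sx k l * (d l - ε * x l))) + Jstar :=
      funext hJx
    rw [e]
    fun_prop
  -- the indicator function as a function of the gradient
  set F : (Fin n → ℝ) → ℝ := fun x => if J (wk - ε • x) ≤ J wk - lam then (1 : ℝ) else 0 with hF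
  have hFmeas : Measurable F := by
    exact Measurable.ite (measurableSet_le hFm measurable_const) measurable_const measurable_const
  have hαF : ∀ i ω, α i ω = F (g i ω) := fun i ω => hα i ω
  -- integrability of α
  have Iα : ∀ (i : Fin 2), Integrable (α i) P := by
    intro i
    refine Integrable.mono' (integrable_const 1)
      ((hFmeas.comp (hmeas i)).aestronglyMeasurable.congr ?_) ?_
    · exact Filter.Eventually.of_forall fun ω => (hαF i ω).symm
    · filter_upwards with ω
      rw [hαF i ω, hF]
      dsimp only
      split <;> simp
  -- identical distribution consequences
  have hEJ : ∫ ω, J (wk - ε • g 1 ω) ∂P = ∫ ω, J (wk - ε • g 0 ω) ∂P := by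
    rw [← integral_map (hmeas 1).aemeasurable hFm.aestronglyMeasurable,
      ← integral_map (hmeas 0).aemeasurable hFm.aestronglyMeasurable, hident]
  have hEα : ∫ ω, α 1 ω ∂P = ∫ ω, α 0 ω ∂P := by
    have e1 : ∫ ω, α 1 ω ∂P = ∫ ω, F (g 1 ω) ∂P :=
      integral_congr_ae (Filter.Eventually.of_forall fun ω => hαF 1 ω)
    have e0 : ∫ ω, α 0 ω ∂P = ∫ ω, F (g 0 ω) ∂P :=
      integral_congr_ae (Filter.Eventually.of_forall fun ω => hαF 0 ω)
    rw [e1, e0, ← integral_map (hmeas 1).aemeasurable hFmeas.aestronglyMeasurable,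
      ← integral_map (hmeas 0).aemeasurable hFmeas.aestronglyMeasurable, hident]
  -- value of the expected cost after one stochastic gradient step
  have hterm_int : ∀ (i : Fin 2) k l,
      Integrable (fun ω => (d k - ε * g i ω k) * (Sx k l * (d l - ε * g i ω l))) P := by
    intro i k l
    have e : (fun ω => (d k - ε * g i ω k) * (Sx k l * (d l - ε * g i ω l))) =
        fun ω => ((Sx k l * (d k * d l) - Sx k l * (ε * (d k * g i ω l)))
          - Sx k l * (ε * (d l * g i ω k))) + Sx k l * (ε * (ε * (g i ω k * g i ω l))) :=
      funext fun ω => by ring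
    rw [e]
    exact (((integrable_const _).sub
        ((((Ig i l).const_mul (d k)).const_mul ε).const_mul (Sx k l))).sub
      ((((Ig i k).const_mul (d l)).const_mul ε).const_mul (Sx k l))).add
      ((((hint2 i k l).const_mul ε).const_mul ε).const_mul (Sx k l))
  have hval : ∀ (i : Fin 2) k l,
      ∫ ω, (d k - ε * g i ω k) * (Sx k l * (d l - ε * g i ω l)) ∂P =
        Sx k l * d k * d l - ε * (Sx k l * d k * m l) - ε * (Sx k l * d l * m k)
          + ε ^ 2 * (Sx k l * G k l) + ε ^ 2 * (Sx k l * (m k * m l)) := by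
    intro i k l
    have e : (fun ω => (d k - ε * g i ω k) * (Sx k l * (d l - ε * g i ω l))) =
        fun ω => ((Sx k l * (d k * d l) - Sx k l * (ε * (d k * g i ω l)))
          - Sx k l * (ε * (d l * g i ω k))) + Sx k l * (ε * (ε * (g i ω k * g i ω l))) :=
      funext fun ω => by ring
    have I1 : Integrable (fun ω => Sx k l * (ε * (d k * g i ω l))) P :=
      (((Ig i l).const_mul (d k)).const_mul ε).const_mul (Sx k l)
    have I2 : Integrable (fun ω => Sx k l * (ε * (d l * g i ω k))) P :=
      (((Ig i k).const_mul (d l)).const_mul ε).const_mul (Sx k l)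
    have I3 : Integrable (fun ω => Sx k l * (ε * (ε * (g i ω k * g i ω l)))) P :=
      (((hint2 i k l).const_mul ε).const_mul ε).const_mul (Sx k l)
    have I4 : Integrable (fun ω => Sx k l * (d k * d l) - Sx k l * (ε * (d k * g i ω l))) P :=
      (integrable_const _).sub I1
    have I5 : Integrable (fun ω => (Sx k l * (d k * d l) - Sx k l * (ε * (d k * g i ω l)))
        - Sx k l * (ε * (d l * g i ω k))) P := I4.sub I2
    have hI1v : ∫ ω, Sx k l * (ε * (d k * g i ω l)) ∂P = Sx k l * (ε * (d k * m l)) := by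
      rw [integral_const_mul (Sx k l) (fun ω => ε * (d k * g i ω l)),
        integral_const_mul ε (fun ω => d k * g i ω l),
        integral_const_mul (d k) (fun ω => g i ω l), hmean i l]
    have hI2v : ∫ ω, Sx k l * (ε * (d l * g i ω k)) ∂P = Sx k l * (ε * (d l * m k)) := by
      rw [integral_const_mul (Sx k l) (fun ω => ε * (d l * g i ω k)),
        integral_const_mul ε (fun ω => d l * g i ω k),
        integral_const_mul (d l) (fun ω => g i ω k), hmean i k]
    have hI3v : ∫ ω, Sx k l * (ε * (ε * (g i ω k * g i ω l))) ∂P =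
        Sx k l * (ε * (ε * (G k l + m k * m l))) := by
      rw [integral_const_mul (Sx k l) (fun ω => ε * (ε * (g i ω k * g i ω l))),
        integral_const_mul ε (fun ω => ε * (g i ω k * g i ω l)),
        integral_const_mul ε (fun ω => g i ω k * g i ω l), M2 i k l]
    rw [e, integral_add I5 I3, integral_sub I4 I2, integral_sub (integrable_const _) I1,
      hI1v, hI2v, hI3v, integral_const]
    simp only [measure_univ, ENNReal.toReal_one, probReal_univ, smul_eq_mul, one_mul]
    ring
  -- quadratic forms
  set P1 : ℝ := d ⬝ᵥ Sx *ᵥ d with hP1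
  set P2 : ℝ := d ⬝ᵥ (Sx * Sx) *ᵥ d with hP2
  set P3 : ℝ := d ⬝ᵥ (Sx * Sx * Sx) *ᵥ d with hP3
  have hmSd : m = (2 : ℝ) • (Sx *ᵥ d) := by
    rw [hm, Matrix.smul_mulVec]
  have A1 : ∑ k, ∑ l, Sx k l * d k * d l = P1 := by
    rw [hP1]
    simp only [dotProduct, mulVec, Finset.mul_sum]
    exact Finset.sum_congr rfl fun k _ => Finset.sum_congr rfl fun l _ => by ring
  have A2 : ∑ k, ∑ l, Sx k l * d k * m l = 2 * P2 := by
    have : ∑ k, ∑ l, Sx k l * d k * m l = d ⬝ᵥ Sx *ᵥ m := by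
      simp only [dotProduct, mulVec, Finset.mul_sum]
      exact Finset.sum_congr rfl fun k _ => Finset.sum_congr rfl fun l _ => by ring
    rw [this, hmSd, mulVec_smul, dotProduct_smul, smul_eq_mul, hP2, ← mulVec_mulVec]
  have A3 : ∑ k, ∑ l, Sx k l * d l * m k = 2 * P2 := by
    have e1 : ∑ k, ∑ l, Sx k l * d l * m k = m ⬝ᵥ Sx *ᵥ d := by
      simp only [dotProduct, mulVec, Finset.mul_sum]
      exact Finset.sum_congr rfl fun k _ => Finset.sum_congr rfl fun l _ => by ring
    rw [e1, osd_dot_symm Sx hSx.1, hmSd, mulVec_smul, dotProduct_smul, smul_eq_mul,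
      hP2, ← mulVec_mulVec]
  have A5 : ∑ k, ∑ l, Sx k l * (m k * m l) = 4 * P3 := by
    have e1 : ∑ k, ∑ l, Sx k l * (m k * m l) = m ⬝ᵥ Sx *ᵥ m := by
      simp only [dotProduct, mulVec, Finset.mul_sum]
      exact Finset.sum_congr rfl fun k _ => Finset.sum_congr rfl fun l _ => by ring
    have e2 : (Sx *ᵥ d) ⬝ᵥ Sx *ᵥ (Sx *ᵥ d) = P3 := by
      rw [dotProduct_comm, osd_dot_symm Sx hSx.1, hP3, mulVec_mulVec, mulVec_mulVec]
    rw [e1, hmSd, smul_dotProduct, mulVec_smul, dotProduct_smul, smul_eq_mul, smul_eq_mul, e2]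
    ring
  have key : ∀ (i : Fin 2), ∫ ω, J (wk - ε • g i ω) ∂P =
      P1 - 4 * ε * P2 + 4 * ε ^ 2 * P3 + ε ^ 2 * (Sx * G).trace + Jstar := by
    intro i
    have e : (fun ω => J (wk - ε • g i ω)) =
        fun ω => (∑ k, ∑ l, (d k - ε * g i ω k) * (Sx k l * (d l - ε * g i ω l))) + Jstar :=
      funext fun ω => hJx (g i ω)
    have Isum : Integrable (fun ω => ∑ k, ∑ l,
        (d k - ε * g i ω k) * (Sx k l * (d l - ε * g i ω l))) P :=
      integrable_finset_sum _ fun k _ => integrable_finset_sum _ fun l _ => hterm_int i k l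
    rw [e, integral_add Isum (integrable_const _),
      integral_finset_sum _ fun k _ => integrable_finset_sum _ fun l _ => hterm_int i k l]
    have e2 : ∀ k ∈ Finset.univ, (∫ ω, ∑ l, (d k - ε * g i ω k) *
          (Sx k l * (d l - ε * g i ω l)) ∂P) =
        ∑ l, (Sx k l * d k * d l - ε * (Sx k l * d k * m l) - ε * (Sx k l * d l * m k)
          + ε ^ 2 * (Sx k l * G k l) + ε ^ 2 * (Sx k l * (m k * m l))) := by
      intro k _
      rw [integral_finset_sum _ fun l _ => hterm_int i k l]
      exact Finset.sum_congr rfl fun l _ => hval i k l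
    rw [Finset.sum_congr rfl e2]
    simp only [Finset.sum_add_distrib, Finset.sum_sub_distrib, ← Finset.mul_sum]
    rw [A1, A2, A3, A5, ← htr, integral_const]
    simp only [measure_univ, ENNReal.toReal_one, probReal_univ, smul_eq_mul, one_mul]
    ring
  -- spectral bound
  obtain ⟨y, hy1, hy2, hy3⟩ := osd_quad_spectral Sx hSx d
  have hbdd : ∀ j, (1 - 2 * ε * hSx.1.eigenvalues j) ^ 2 ≤ ρ := by
    intro j
    rw [hρ]
    exact le_ciSup (f := fun j => (1 - 2 * ε * hSx.1.eigenvalues j) ^ 2)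
      (Set.Finite.bddAbove (Set.finite_range _)) j
  have hspec_le : P1 - 4 * ε * P2 + 4 * ε ^ 2 * P3 ≤ ρ * P1 := by
    have e : P1 - 4 * ε * P2 + 4 * ε ^ 2 * P3 =
        ∑ j, hSx.1.eigenvalues j * (1 - 2 * ε * hSx.1.eigenvalues j) ^ 2 * y j ^ 2 := by
      rw [hP1, hP2, hP3, hy1, hy2, hy3, Finset.mul_sum, Finset.mul_sum,
        ← Finset.sum_sub_distrib, ← Finset.sum_add_distrib]
      exact Finset.sum_congr rfl fun j _ => by ring
    have e2 : ρ * P1 = ∑ j, ρ * (hSx.1.eigenvalues j * y j ^ 2) := by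
      rw [hP1, hy1, Finset.mul_sum]
    rw [e, e2]
    refine Finset.sum_le_sum fun j _ => ?_
    have hev := hSx.eigenvalues_nonneg j
    nlinarith [mul_nonneg (mul_nonneg (sub_nonneg.2 (hbdd j)) hev) (sq_nonneg (y j)),
      sq_nonneg (y j)]
  have hJwk : J wk = P1 + Jstar := by rw [hJ wk, hP1, hd]
  have sgd : ∀ (i : Fin 2), ∫ ω, J (wk - ε • g i ω) ∂P ≤
      ρ * J wk + ε ^ 2 * (Sx * G).trace + (1 - ρ) * Jstar := by
    intro i
    rw [key i, hJwk]
    nlinarith [hspec_le]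
  -- pointwise descent inequality
  have Jmid : ∀ u v, J ((1/2 : ℝ) • (u + v)) ≤ 1/2 * J u + 1/2 * J v := by
    intro u v
    rw [hJ, hJ, hJ]
    have e : (1/2 : ℝ) • (u + v) - wstar = (1/2 : ℝ) • ((u - wstar) + (v - wstar)) := by
      funext k; simp; ring
    rw [e]
    have := osd_quad_mid Sx hSx (u - wstar) (v - wstar)
    linarith
  have hpt : ∀ ω, J (wnext ω) ≤
      1/2 * ((1 - α 0 ω) * lam + J (wk - ε • g 0 ω)) +
      1/2 * ((1 - α 1 ω) * lam + J (wk - ε • g 1 ω)) := by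
    intro ω
    have h0 := hα 0 ω
    have h1 := hα 1 ω
    by_cases c0 : J (wk - ε • g 0 ω) ≤ J wk - lam <;>
      by_cases c1 : J (wk - ε • g 1 ω) ≤ J wk - lam
    · -- both transmit : midpoint
      have hα0 : α 0 ω = 1 := by rw [h0, if_pos c0]
      have hα1 : α 1 ω = 1 := by rw [h1, if_pos c1]
      have hw : wnext ω = wk - (ε/2) • (g 0 ω + g 1 ω) := by
        rw [hnext ω, if_pos hα0, if_pos hα1]
      have hmid : wk - (ε/2) • (g 0 ω + g 1 ω) =
          (1/2 : ℝ) • ((wk - ε • g 0 ω) + (wk - ε • g 1 ω)) := by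
        funext k
        simp [Pi.smul_apply, smul_eq_mul]
        ring
      rw [hw, hmid, hα0, hα1]
      have := Jmid (wk - ε • g 0 ω) (wk - ε • g 1 ω)
      linarith
    · -- only agent 0 transmits
      have hα0 : α 0 ω = 1 := by rw [h0, if_pos c0]
      have hα1 : α 1 ω ≠ 1 := by rw [h1, if_neg c1]; norm_num
      have hα1' : α 1 ω = 0 := by rw [h1, if_neg c1]
      have hw : wnext ω = wk - ε • g 0 ω := by
        rw [hnext ω, if_pos hα0, if_neg hα1]
      push_neg at c1
      rw [hw, hα0, hα1']
      linarith
    · -- only agent 1 transmits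
      have hα0 : α 0 ω ≠ 1 := by rw [h0, if_neg c0]; norm_num
      have hα0' : α 0 ω = 0 := by rw [h0, if_neg c0]
      have hα1 : α 1 ω = 1 := by rw [h1, if_pos c1]
      have hw : wnext ω = wk - ε • g 1 ω := by
        rw [hnext ω, if_neg hα0, if_pos hα1]
      push_neg at c0
      rw [hw, hα0', hα1]
      linarith
    · -- no transmission
      have hα0 : α 0 ω ≠ 1 := by rw [h0, if_neg c0]; norm_num
      have hα0' : α 0 ω = 0 := by rw [h0, if_neg c0]
      have hα1 : α 1 ω ≠ 1 := by rw [h1, if_neg c1]; norm_num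
      have hα1' : α 1 ω = 0 := by rw [h1, if_neg c1]
      have hw : wnext ω = wk := by
        rw [hnext ω, if_neg hα0, if_neg hα1]
      push_neg at c0; push_neg at c1
      rw [hw, hα0', hα1']
      linarith
  -- integrate the pointwise bound
  have Irhs : ∀ (i : Fin 2),
      Integrable (fun ω => (1 - α i ω) * lam + J (wk - ε • g i ω)) P :=
    fun i => (((integrable_const 1).sub (Iα i)).mul_const lam).add (hintJ i)
  have hInt : ∫ ω, J (wnext ω) ∂P ≤
      1/2 * ((∫ ω, (1 - α 0 ω) ∂P) * lam + ∫ ω, J (wk - ε • g 0 ω) ∂P) +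
      1/2 * ((∫ ω, (1 - α 1 ω) ∂P) * lam + ∫ ω, J (wk - ε • g 1 ω) ∂P) := by
    have Ih0 : Integrable (fun ω => 1/2 * ((1 - α 0 ω) * lam + J (wk - ε • g 0 ω))) P :=
      (Irhs 0).const_mul _
    have Ih1 : Integrable (fun ω => 1/2 * ((1 - α 1 ω) * lam + J (wk - ε • g 1 ω))) P :=
      (Irhs 1).const_mul _
    have Ia0 : Integrable (fun ω => (1 - α 0 ω) * lam) P :=
      ((integrable_const 1).sub (Iα 0)).mul_const lam
    have Ia1 : Integrable (fun ω => (1 - α 1 ω) * lam) P :=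
      ((integrable_const 1).sub (Iα 1)).mul_const lam
    have step : ∫ ω, J (wnext ω) ∂P ≤
        ∫ ω, (1/2 * ((1 - α 0 ω) * lam + J (wk - ε • g 0 ω)) +
          1/2 * ((1 - α 1 ω) * lam + J (wk - ε • g 1 ω))) ∂P :=
      integral_mono hintnext (Ih0.add Ih1) hpt
    rw [integral_add Ih0 Ih1, integral_const_mul, integral_const_mul,
      integral_add Ia0 (hintJ 0), integral_add Ia1 (hintJ 1),
      integral_mul_const, integral_mul_const] at step
    exact step
  have hE1α : ∫ ω, (1 - α 1 ω) ∂P = ∫ ω, (1 - α 0 ω) ∂P := by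
    rw [integral_sub (integrable_const 1) (Iα 1), integral_sub (integrable_const 1) (Iα 0), hEα]
  -- conclude
  have main : ∫ ω, J (wnext ω) ∂P ≤
      (∫ ω, (1 - α 0 ω) ∂P) * lam + ρ * J wk + ε ^ 2 * (Sx * G).trace + (1 - ρ) * Jstar := by
    have h0 := sgd 0
    calc ∫ ω, J (wnext ω) ∂P
        ≤ 1/2 * ((∫ ω, (1 - α 0 ω) ∂P) * lam + ∫ ω, J (wk - ε • g 0 ω) ∂P) +
          1/2 * ((∫ ω, (1 - α 1 ω) ∂P) * lam + ∫ ω, J (wk - ε • g 1 ω) ∂P) := hInt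
      _ = (∫ ω, (1 - α 0 ω) ∂P) * lam + ∫ ω, J (wk - ε • g 0 ω) ∂P := by
          rw [hE1α, hEJ]; ring
      _ ≤ (∫ ω, (1 - α 0 ω) ∂P) * lam + (ρ * J wk + ε ^ 2 * (Sx * G).trace + (1 - ρ) * Jstar) := by
          linarith
      _ = (∫ ω, (1 - α 0 ω) ∂P) * lam + ρ * J wk + ε ^ 2 * (Sx * G).trace + (1 - ρ) * Jstar := by
          ring
  intro i
  match i with
  | 0 => exact main
  | 1 => rw [hE1α]; exact main
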